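/- Let n ≥ 3 be an integer and κ > 0, and set s0 := (2 κ^{n/(n−2)} / (3(n−2)))^{(n−2)/2}. Then the function g(s) := s³ sinh(κ^{n/(n−2)} s^{−2/(n−2)}) satisfies g′(s) ≤ 0 for all s ∈ (0, s0); in particular, g is nonincreasing on (0, s0). -/

import Mathlib

theorem stmt13 (n : ℕ) (hn : 3 ≤ n) (κ : ℝ) (hκ : 0 < κ)
    (s0 : ℝ)
    (hs0 : s0 = (2 * κ ^ ((n : ℝ) / ((n : ℝ) - 2)) / (3 * ((n : ℝ) - 2))) ^ (((n : ℝ) - 2) / 2)) :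
    (∀ s ∈ Set.Ioo (0 : ℝ) s0,
      deriv (fun s : ℝ =>
        s ^ 3 * Real.sinh (κ ^ ((n : ℝ) / ((n : ℝ) - 2)) * s ^ (-(2 : ℝ) / ((n : ℝ) - 2)))) s ≤ 0) ∧
    AntitoneOn (fun s : ℝ =>
      s ^ 3 * Real.sinh (κ ^ ((n : ℝ) / ((n : ℝ) - 2)) * s ^ (-(2 : ℝ) / ((n : ℝ) - 2))))
      (Set.Ioo (0 : ℝ) s0) := by
  have hn' : (3 : ℝ) ≤ (n : ℝ) := by exact_mod_cast hn
  have hn2 : (0 : ℝ) < (n : ℝ) - 2 := by linarith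
  set a : ℝ := κ ^ ((n : ℝ) / ((n : ℝ) - 2)) with ha_def
  have ha : 0 < a := Real.rpow_pos_of_pos hκ _
  set x : ℝ := -(2 : ℝ) / ((n : ℝ) - 2) with hx_def
  have hx : x < 0 := div_neg_of_neg_of_pos (by norm_num) hn2
  set c : ℝ := 2 * a / (3 * ((n : ℝ) - 2)) with hc_def
  have hc : 0 < c := by positivity
  -- s0 ^ x = c⁻¹
  have hs0x : s0 ^ x = c⁻¹ := by
    rw [hs0, ← Real.rpow_mul hc.le,
      show ((n : ℝ) - 2) / 2 * x = -1 by rw [hx_def]; field_simp,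
      Real.rpow_neg_one]
  have key : ∀ s ∈ Set.Ioo (0 : ℝ) s0,
      HasDerivAt (fun s : ℝ => s ^ 3 * Real.sinh (a * s ^ x))
        (3 * s ^ 2 * Real.sinh (a * s ^ x)
          + s ^ 3 * (Real.cosh (a * s ^ x) * (a * (x * s ^ (x - 1))))) s := by
    intro s hs
    have h1 : HasDerivAt (fun s : ℝ => s ^ x) (x * s ^ (x - 1)) s :=
      Real.hasDerivAt_rpow_const (Or.inl hs.1.ne')
    have h2 : HasDerivAt (fun s : ℝ => a * s ^ x) (a * (x * s ^ (x - 1))) s := h1.const_mul a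
    have h3 : HasDerivAt (fun s : ℝ => Real.sinh (a * s ^ x))
        (Real.cosh (a * s ^ x) * (a * (x * s ^ (x - 1)))) s :=
      (Real.hasDerivAt_sinh _).comp s h2
    have h4 : HasDerivAt (fun s : ℝ => s ^ 3) (3 * s ^ 2) s := by
      simpa using hasDerivAt_pow 3 s
    exact h4.mul h3
  have deriv_nonpos : ∀ s ∈ Set.Ioo (0 : ℝ) s0,
      3 * s ^ 2 * Real.sinh (a * s ^ x)
        + s ^ 3 * (Real.cosh (a * s ^ x) * (a * (x * s ^ (x - 1)))) ≤ 0 := by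
    intro s hs
    have hs0pos : 0 < s := hs.1
    set u : ℝ := a * s ^ x with hu_def
    have hsx : s0 ^ x < s ^ x := Real.rpow_lt_rpow_of_neg hs0pos hs.2 hx
    have hu_lb : a * c⁻¹ < u := by
      rw [← hs0x]
      exact (mul_lt_mul_iff_right₀ ha).2 hsx
    have hac : a * c⁻¹ = 3 * ((n : ℝ) - 2) / 2 := by
      rw [hc_def]; field_simp
    have hu3 : 3 < (-x) * u := by
      have h1 : 3 * ((n : ℝ) - 2) / 2 < u := by rw [← hac]; exact hu_lb
      have hxval : -x = 2 / ((n : ℝ) - 2) := by rw [hx_def]; field_simp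
      rw [hxval]
      rw [show (3 : ℝ) = 2 / ((n : ℝ) - 2) * (3 * ((n : ℝ) - 2) / 2) by field_simp]
      exact mul_lt_mul_of_pos_left h1 (by positivity)
    have hcoshpos : 0 < Real.cosh u := Real.cosh_pos u
    have hsinh_le : Real.sinh u ≤ Real.cosh u := (Real.sinh_lt_cosh u).le
    have hrw : s ^ 3 * (Real.cosh u * (a * (x * s ^ (x - 1))))
        = s ^ 2 * (x * u * Real.cosh u) := by
      rw [hu_def]
      rw [show (s : ℝ) ^ 3 = s ^ 2 * s from by ring]
      have hss : s * s ^ (x - 1) = s ^ x := by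
        conv_rhs => rw [show x = 1 + (x - 1) by ring]
        rw [Real.rpow_add hs0pos, Real.rpow_one]
      calc s ^ 2 * s * (Real.cosh (a * s ^ x) * (a * (x * s ^ (x - 1))))
          = s ^ 2 * ((x * (a * (s * s ^ (x - 1)))) * Real.cosh (a * s ^ x)) := by ring
        _ = s ^ 2 * (x * (a * s ^ x) * Real.cosh (a * s ^ x)) := by rw [hss]
    rw [hrw]
    have hmain : 3 * Real.sinh u + x * u * Real.cosh u ≤ 0 := by
      have h1 : 3 * Real.sinh u ≤ 3 * Real.cosh u := by linarith
      have h2 : 3 * Real.cosh u < (-x) * u * Real.cosh u :=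
        (mul_lt_mul_iff_left₀ hcoshpos).2 hu3
      nlinarith
    calc 3 * s ^ 2 * Real.sinh u + s ^ 2 * (x * u * Real.cosh u)
        = s ^ 2 * (3 * Real.sinh u + x * u * Real.cosh u) := by ring
      _ ≤ 0 := mul_nonpos_of_nonneg_of_nonpos (sq_nonneg s) hmain
  constructor
  · intro s hs
    rw [(key s hs).deriv]
    exact deriv_nonpos s hs
  · apply antitoneOn_of_deriv_nonpos (convex_Ioo _ _)
    · exact fun s hs => (key s hs).differentiableAt.continuousAt.continuousWithinAt
    · intro s hs
      rw [interior_Ioo] at hs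
      exact (key s hs).differentiableAt.differentiableWithinAt
    · intro s hs
      rw [interior_Ioo] at hs
      rw [(key s hs).deriv]
      exact deriv_nonpos s hs
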